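/- The class of non-emitting Markov models is strictly more powerful than the class of interpolated Markov models: (i) for every n and every interpolated Markov model of order n over A = {0,1} there is a hierarchical non-emitting Markov model of order n assigning exactly the same probability to every string; and (ii) there exists a hierarchical non-emitting Markov model φ of order 2 over A such that for every n and every interpolated Markov model φ' of order n over A, there exists a string x^T with p_ε(x^T | φ) ≠ p_c(x^T | φ'). -/

import Mathlib

open Finset

/-- The suffix of `l` of length `min k l.length`. -/
def suff {A : Type*} (k : ℕ) (l : List A) : List A := l.drop (l.length - k)
/-- Hierarchical non-emitting Markov model of order `n` with emitting
transition probabilities `d` and non-emitting parameters `lam` (with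
`lam [] = 1`): probability of emitting the string `w` from state `x`.
From a nonempty state `x`, with probability `lam x` it emits `y` via `d x y`
and moves to the suffix of `x ++ [y]` of length `min (|x|+1) n`; with
probability `1 - lam x` it moves to the suffix `x.tail` without emitting. -/
noncomputable def pe {A : Type*} (n : ℕ) (d : List A → A → ℝ) (lam : List A → ℝ) :
    List A → List A → ℝ
  | _, [] => 1
  | [], y :: w => lam [] * d [] y * pe n d lam (suff n [y]) w
  | a :: x, y :: w =>
      lam (a :: x) * d (a :: x) y * pe n d lam (suff n ((a :: x) ++ [y])) w
      + (1 - lam (a :: x)) * pe n d lam x (y :: w)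
termination_by x w => (w.length, x.length)
/-- Next-symbol probability of an interpolated Markov model in context `c`:
a linear mixture over the suffixes of `c` of all orders `0 ≤ i ≤ |c|`. -/
noncomputable def pcSym {A : Type*} (d : List A → A → ℝ) (lamI : ℕ → List A → ℝ)
    (c : List A) (y : A) : ℝ :=
  ∑ i ∈ Finset.range (c.length + 1), lamI i c * d (suff i c) y

/-- Interpolated Markov model of order `n`: probability of emitting the string
`w` after the history `h`. -/
noncomputable def pc {A : Type*} (n : ℕ) (d : List A → A → ℝ) (lamI : ℕ → List A → ℝ) :
    List A → List A → ℝ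
  | _, [] => 1
  | h, y :: w => pcSym d lamI (suff n h) y * pc n d lamI (h ++ [y]) w
/-- Validity of an order-`n` interpolated Markov model: transition
distributions for every context of length at most `n`, and for each such
context a probability distribution of mixing parameters over the orders
`0 ≤ i ≤ |c|`. -/
def IsInterp {A : Type*} [Fintype A] (n : ℕ) (d : List A → A → ℝ)
    (lamI : ℕ → List A → ℝ) : Prop :=
  (∀ c : List A, c.length ≤ n →
    (∀ y : A, 0 ≤ d c y) ∧ (∑ y : A, d c y = 1)) ∧
  (∀ c : List A, c.length ≤ n →
    (∀ i ≤ c.length, 0 ≤ lamI i c ∧ lamI i c ≤ 1) ∧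
    ∑ i ∈ Finset.range (c.length + 1), lamI i c = 1)
/-- Validity of an order-`n` hierarchical non-emitting Markov model: emitting
distributions for every state of length at most `n`, non-emitting parameters
in `[0,1]`, and `λ₀(ε) = 1`. -/
def IsNonEmit {A : Type*} [Fintype A] (n : ℕ) (d : List A → A → ℝ)
    (lam : List A → ℝ) : Prop :=
  (∀ c : List A, c.length ≤ n →
    (∀ y : A, 0 ≤ d c y) ∧ (∑ y : A, d c y = 1)) ∧
  (∀ c : List A, c.length ≤ n → 0 ≤ lam c ∧ lam c ≤ 1) ∧
  lam [] = 1

lemma pe_nil {A : Type*} (n : ℕ) (d : List A → A → ℝ) (lam : List A → ℝ) (x : List A) :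
    pe n d lam x [] = 1 := by cases x <;> simp [pe]

lemma suff_length_le {A : Type*} (k : ℕ) (l : List A) : (suff k l).length ≤ l.length := by
  simp [suff]

lemma suff_suff_append {A : Type*} (n : ℕ) (h : List A) (y : A) :
    suff n (suff n h ++ [y]) = suff n (h ++ [y]) := by
  rcases Nat.eq_zero_or_pos n with hn | hn
  · subst hn; simp [suff]
  · unfold suff
    rw [List.length_append, List.length_drop, List.length_append]
    simp only [List.length_singleton, List.length_cons, List.length_nil]
    rw [List.drop_append_of_le_length (by simp; omega),
        List.drop_append_of_le_length (by simp; omega), List.drop_drop]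
    congr 1
    congr 1
    omega

lemma pe_one_cons {A : Type*} (n : ℕ) (d : List A → A → ℝ) (x : List A) (y : A) (w : List A) :
    pe n d (fun _ => 1) x (y :: w) = d x y * pe n d (fun _ => 1) (suff n (x ++ [y])) w := by
  cases x with
  | nil => simp [pe]
  | cons a x => simp [pe]

lemma part1_pe_eq_pc {A : Type*} (n : ℕ) (d : List A → A → ℝ) (lamI : ℕ → List A → ℝ) :
    ∀ (w h : List A), pe n (fun c y => pcSym d lamI c y) (fun _ => 1) (suff n h) w
      = pc n d lamI h w
  | [], h => by rw [pe_nil]; simp [pc]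
  | y :: w, h => by
      rw [pe_one_cons, suff_suff_append, part1_pe_eq_pc n d lamI w (h ++ [y])]
      simp [pc]

noncomputable def d0 : List (Fin 2) → Fin 2 → ℝ :=
  fun c y => if c = [0] then (if y = 0 then 1/4 else 3/4) else 1/2

noncomputable def lam0 : List (Fin 2) → ℝ := fun c => if c = [0] then 1/2 else 1

def z (k : ℕ) : List (Fin 2) := List.replicate k 0

lemma z_succ (k : ℕ) : z (k + 1) = 0 :: z k := List.replicate_succ

lemma pe_cons {A : Type*} (n : ℕ) (d : List A → A → ℝ) (lam : List A → ℝ)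
    (a : A) (x : List A) (y : A) (w : List A) :
    pe n d lam (a :: x) (y :: w)
      = lam (a :: x) * d (a :: x) y * pe n d lam (suff n ((a :: x) ++ [y])) w
        + (1 - lam (a :: x)) * pe n d lam x (y :: w) := by
  simp [pe]

lemma pe_nil_cons {A : Type*} (n : ℕ) (d : List A → A → ℝ) (lam : List A → ℝ)
    (y : A) (w : List A) :
    pe n d lam [] (y :: w) = lam [] * d [] y * pe n d lam (suff n [y]) w := by
  simp [pe]

lemma pe_f : ∀ k : ℕ, pe 2 d0 lam0 [0, 0] (z k) = 1 / 2 ^ k := by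
  intro k; induction k with
  | zero => simp [z, pe]
  | succ k ih =>
    rw [z_succ, pe_cons, show suff 2 ([0,0] ++ [(0:Fin 2)]) = [0,0] from rfl, ih]
    simp only [d0, lam0]
    norm_num [pow_succ]

lemma pe_g : ∀ k : ℕ, pe 2 d0 lam0 [0] (z k) = (2 ^ k + 1) / (2 * 4 ^ k) := by
  intro k; induction k with
  | zero => simp [z, pe]
  | succ k ih =>
    rw [z_succ, pe_cons, show suff 2 ([0] ++ [(0:Fin 2)]) = [0,0] from rfl, pe_f k,
        pe_nil_cons, show suff 2 [(0:Fin 2)] = [0] from rfl, ih]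
    simp only [d0, lam0]
    have h4 : (4:ℝ) ^ k = 2 ^ k * 2 ^ k := by
      rw [show (4:ℝ) = 2 * 2 by norm_num, mul_pow]
    norm_num [pow_succ, h4]
    field_simp
    ring

lemma pe_a (k : ℕ) : pe 2 d0 lam0 [] (z (k + 1)) = (2 ^ k + 1) / (4 * 4 ^ k) := by
  rw [z_succ, pe_nil_cons, show suff 2 [(0:Fin 2)] = [0] from rfl, pe_g k]
  simp only [d0, lam0]
  norm_num
  ring

lemma pc_cons {A : Type*} (n : ℕ) (d : List A → A → ℝ) (lamI : ℕ → List A → ℝ)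
    (h : List A) (y : A) (w : List A) :
    pc n d lamI h (y :: w) = pcSym d lamI (suff n h) y * pc n d lamI (h ++ [y]) w := by
  simp [pc]

lemma pc_append {A : Type*} (n : ℕ) (d : List A → A → ℝ) (lamI : ℕ → List A → ℝ) :
    ∀ (w h : List A) (y : A),
      pc n d lamI h (w ++ [y]) = pc n d lamI h w * pcSym d lamI (suff n (h ++ w)) y
  | [], h, y => by simp [pc, pc_cons]
  | x :: w, h, y => by
      rw [List.cons_append, pc_cons, pc_append n d lamI w (h ++ [x]) y, pc_cons,
          List.append_assoc]
      simp only [List.singleton_append]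
      ring

lemma suff_z (n k : ℕ) (hk : n ≤ k) : suff n (z k) = z n := by
  simp only [suff, z, List.length_replicate, List.drop_replicate]
  rw [show k - (k - n) = n by omega]
/-- The class of non-emitting Markov models is strictly more powerful than
the class of interpolated Markov models over the binary alphabet: (i) every
order-`n` interpolated model is matched exactly by an order-`n` hierarchical
non-emitting model, and (ii) some order-2 hierarchical non-emitting model
disagrees with every interpolated model on the probability of some string. -/
theorem nonemitting_strictly_more_powerful_than_interpolated :
    (∀ (n : ℕ) (d : List (Fin 2) → Fin 2 → ℝ) (lamI : ℕ → List (Fin 2) → ℝ),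
      IsInterp n d lamI →
      ∃ (d' : List (Fin 2) → Fin 2 → ℝ) (lam : List (Fin 2) → ℝ),
        IsNonEmit n d' lam ∧
        ∀ x : List (Fin 2), pe n d' lam [] x = pc n d lamI [] x) ∧
    (∃ (d : List (Fin 2) → Fin 2 → ℝ) (lam : List (Fin 2) → ℝ),
      IsNonEmit 2 d lam ∧
      ∀ (n : ℕ) (d' : List (Fin 2) → Fin 2 → ℝ) (lamI' : ℕ → List (Fin 2) → ℝ),
        IsInterp n d' lamI' →
        ∃ x : List (Fin 2), pe 2 d lam [] x ≠ pc n d' lamI' [] x) := by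
  constructor
  · -- Part (i)
    intro n d lamI hI
    refine ⟨fun c y => pcSym d lamI c y, fun _ => 1, ⟨?_, fun c _ => ⟨zero_le_one, le_refl 1⟩, rfl⟩, ?_⟩
    · intro c hc
      constructor
      · intro y
        refine Finset.sum_nonneg fun i hi => mul_nonneg ?_ ?_
        · exact ((hI.2 c hc).1 i (Finset.mem_range_succ_iff.mp hi)).1
        · exact (hI.1 (suff i c) (le_trans (suff_length_le i c) hc)).1 y
      · rw [show ∑ y : Fin 2, pcSym d lamI c y
              = ∑ i ∈ Finset.range (c.length + 1), lamI i c * ∑ y : Fin 2, d (suff i c) y by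
            simp only [pcSym]
            rw [Finset.sum_comm]
            exact Finset.sum_congr rfl fun i _ => (Finset.mul_sum _ _ _).symm]
        rw [show (∑ i ∈ Finset.range (c.length + 1), lamI i c * ∑ y : Fin 2, d (suff i c) y)
              = ∑ i ∈ Finset.range (c.length + 1), lamI i c from
            Finset.sum_congr rfl fun i _ => by
              rw [(hI.1 (suff i c) (le_trans (suff_length_le i c) hc)).2, mul_one]]
        exact (hI.2 c hc).2
    · intro x
      have := part1_pe_eq_pc n d lamI x []
      simpa [suff] using this
  · -- Part (ii)
    refine ⟨d0, lam0, ⟨?_, ?_, ?_⟩, ?_⟩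
    · intro c _
      constructor
      · intro y
        simp only [d0]
        split
        · split <;> norm_num
        · norm_num
      · simp only [d0]
        rw [Fin.sum_univ_two]
        split <;> norm_num
    · intro c _
      simp only [lam0]
      split <;> norm_num
    · simp [lam0]
    · intro n d' lamI' hI'
      by_contra hx
      push_neg at hx
      -- values of pe on all-zero strings
      have e1 := hx (z (n + 1)); rw [pe_a n] at e1
      have e2 := hx (z (n + 2)); rw [pe_a (n + 1)] at e2
      have e3 := hx (z (n + 3)); rw [pe_a (n + 2)] at e3
      set q := pcSym d' lamI' (z n) 0 with hq
      have step : ∀ k, n ≤ k →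
          pc n d' lamI' [] (z (k + 1)) = pc n d' lamI' [] (z k) * q := by
        intro k hk
        have hz : z (k + 1) = z k ++ [0] := by
          simp [z, List.replicate_succ']
        rw [hz, pc_append, List.nil_append, suff_z n k hk]
      have s1 := step (n + 1) (by omega)
      have s2 := step (n + 2) (by omega)
      rw [← e1, ← e2] at s1
      rw [← e2, ← e3] at s2
      -- derive contradiction
      have t0 : (0:ℝ) < 2 ^ n := by positivity
      have t4 : (0:ℝ) < 4 ^ n := by positivity
      have h4 : (4:ℝ) ^ n = 2 ^ n * 2 ^ n := by
        rw [show (4:ℝ) = 2 * 2 by norm_num, mul_pow]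
      simp only [pow_succ] at s1 s2
      field_simp at s1 s2
      have hs0 : (4:ℝ) * 4 ^ n ≠ 0 := by positivity
      have c1 : (2:ℝ) ^ n * 2 + 1 = (2 ^ n + 1) * q * 4 :=
        mul_right_cancel₀ hs0 (by linear_combination (4 * 4 ^ n) * s1)
      have c2 : (2:ℝ) ^ n * 2 * 2 + 1 = (2 ^ n * 2 + 1) * q * 4 :=
        mul_right_cancel₀ (by positivity : (4:ℝ) * (4 ^ n * 4) ≠ 0) (by linear_combination (4 * (4 ^ n * 4)) * s2)
      have hz0 : (2:ℝ) ^ n = 0 := by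
        linear_combination (2 ^ n + 1) * c2 - (2 ^ n * 2 + 1) * c1
      linarith
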